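/- Let α > -1/2 be a real number. Then there exists a constant C > 0 such that for all θ with 0 < θ ≤ π/2, h(θ) := (sin θ)^{-2α} ∫_0^θ (cos φ - cos θ)^{α - 1/2} dφ ≤ C. -/
import Mathlib


open MeasureTheory Filter Set

/-- Jordan-type lower bound: `cos φ - cos θ ≥ (θ² - φ²)/8` on the relevant range. -/
private lemma cos_sub_cos_lower_aux {φ θ : ℝ} (hφ : 0 ≤ φ) (hφθ : φ ≤ θ)
    (hθ : θ ≤ Real.pi / 2) :
    (θ ^ 2 - φ ^ 2) / 8 ≤ Real.cos φ - Real.cos θ := by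
  have hπ4 := Real.pi_le_four
  have hπ := Real.pi_pos
  have h1 : Real.cos φ - Real.cos θ =
      2 * Real.sin ((φ + θ) / 2) * Real.sin ((θ - φ) / 2) := by
    rw [Real.cos_sub_cos]
    have h2 : (φ - θ) / 2 = -((θ - φ) / 2) := by ring
    rw [h2, Real.sin_neg]; ring
  have ha : 2 / Real.pi * ((φ + θ) / 2) ≤ Real.sin ((φ + θ) / 2) :=
    Real.mul_le_sin (by linarith) (by linarith)
  have hb : 2 / Real.pi * ((θ - φ) / 2) ≤ Real.sin ((θ - φ) / 2) :=
    Real.mul_le_sin (by linarith) (by linarith)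
  have h2π : (1 : ℝ) / 2 ≤ 2 / Real.pi := by
    rw [div_le_div_iff₀ (by norm_num) hπ]; linarith
  have ha' : (φ + θ) / 4 ≤ Real.sin ((φ + θ) / 2) := by
    refine le_trans ?_ ha
    nlinarith [mul_le_mul_of_nonneg_right h2π (show (0:ℝ) ≤ φ + θ by linarith)]
  have hb' : (θ - φ) / 4 ≤ Real.sin ((θ - φ) / 2) := by
    refine le_trans ?_ hb
    nlinarith [mul_le_mul_of_nonneg_right h2π (show (0:ℝ) ≤ θ - φ by linarith)]
  have ha0 : (0 : ℝ) ≤ (φ + θ) / 4 := by linarith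
  have hb0 : (0 : ℝ) ≤ (θ - φ) / 4 := by linarith
  have hprod : (φ + θ) / 4 * ((θ - φ) / 4) ≤
      Real.sin ((φ + θ) / 2) * Real.sin ((θ - φ) / 2) :=
    mul_le_mul ha' hb' hb0 (le_trans ha0 ha')
  rw [h1]
  nlinarith [hprod]

/-- Comparison of `sin θ ^ (-(2α))` with `θ ^ (-(2α))` on `(0, π/2]`. -/
private lemma sin_rpow_bound_aux (α : ℝ) :
    ∃ K > (0 : ℝ), ∀ θ : ℝ, 0 < θ → θ ≤ Real.pi / 2 →
      Real.sin θ ^ (-(2 * α)) ≤ K * θ ^ (-(2 * α)) := by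
  have hπ := Real.pi_pos
  refine ⟨max 1 ((2 / Real.pi) ^ (-(2 * α))), lt_max_of_lt_left one_pos, ?_⟩
  intro θ hθ hθ'
  have hθπ : θ ≤ Real.pi := le_trans hθ' (by linarith)
  have hθr : (0 : ℝ) ≤ θ ^ (-(2 * α)) := Real.rpow_nonneg hθ.le _
  rcases le_or_gt 0 (-(2 * α)) with h | h
  · calc Real.sin θ ^ (-(2 * α)) ≤ θ ^ (-(2 * α)) :=
        Real.rpow_le_rpow (Real.sin_nonneg_of_nonneg_of_le_pi hθ.le hθπ)
          (Real.sin_le hθ.le) h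
      _ ≤ max 1 ((2 / Real.pi) ^ (-(2 * α))) * θ ^ (-(2 * α)) := by
        nlinarith [le_max_left (1 : ℝ) ((2 / Real.pi) ^ (-(2 * α)))]
  · have hlow : 2 / Real.pi * θ ≤ Real.sin θ := Real.mul_le_sin hθ.le hθ'
    have hpos : 0 < 2 / Real.pi * θ := by positivity
    calc Real.sin θ ^ (-(2 * α)) ≤ (2 / Real.pi * θ) ^ (-(2 * α)) :=
        Real.rpow_le_rpow_of_nonpos hpos hlow h.le
      _ = (2 / Real.pi) ^ (-(2 * α)) * θ ^ (-(2 * α)) :=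
        Real.mul_rpow (by positivity) hθ.le
      _ ≤ max 1 ((2 / Real.pi) ^ (-(2 * α))) * θ ^ (-(2 * α)) := by
        nlinarith [le_max_right (1 : ℝ) ((2 / Real.pi) ^ (-(2 * α)))]

/-- For `α > -1/2`, the function
`h(θ) = (sin θ)^{-2α} ∫_0^θ (cos φ - cos θ)^{α-1/2} dφ` is bounded on `(0, π/2]`. -/
theorem dirichlet_mehler_kernel_bounded (α : ℝ) (hα : -(1/2) < α) :
    ∃ C > (0 : ℝ), ∀ θ : ℝ, 0 < θ → θ ≤ Real.pi / 2 →
      Real.sin θ ^ (-(2 * α)) *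
        (∫ φ in (0 : ℝ)..θ, (Real.cos φ - Real.cos θ) ^ (α - 1/2)) ≤ C := by
  set β := α - 1/2 with hβdef
  have hβ : (-1 : ℝ) < β := by rw [hβdef]; linarith
  have hβ1 : (0 : ℝ) < β + 1 := by linarith
  obtain ⟨K, hK0, hKbound⟩ := sin_rpow_bound_aux α
  have hexp : -(2 * α) + (1 + 2 * β) = 0 := by rw [hβdef]; ring
  rcases le_or_gt 0 β with hβpos | hβneg
  · -- case β ≥ 0 : integrand bounded by (θ²/2)^β
    refine ⟨K * 2 ^ (-β), by positivity, ?_⟩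
    intro θ hθ hθ'
    have hθπ : θ ≤ Real.pi := le_trans hθ' (by linarith [Real.pi_pos])
    have hcont : Continuous fun x : ℝ => x ^ β := by
      rw [continuous_iff_continuousAt]
      exact fun x => Real.continuousAt_rpow_const x β (Or.inr hβpos)
    have hfc : Continuous fun φ : ℝ => (Real.cos φ - Real.cos θ) ^ β :=
      hcont.comp (Real.continuous_cos.sub continuous_const)
    have hfint : IntervalIntegrable (fun φ : ℝ => (Real.cos φ - Real.cos θ) ^ β)
        volume 0 θ := hfc.intervalIntegrable 0 θ
    have hptwise : ∀ φ ∈ Icc (0 : ℝ) θ,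
        (Real.cos φ - Real.cos θ) ^ β ≤ (θ ^ 2 / 2) ^ β := by
      intro φ hφ
      have h0 : Real.cos θ ≤ Real.cos φ :=
        Real.cos_le_cos_of_nonneg_of_le_pi hφ.1 hθπ hφ.2
      have hup : Real.cos φ - Real.cos θ ≤ θ ^ 2 / 2 := by
        have h1 := Real.cos_le_one φ
        have h2 := Real.one_sub_sq_div_two_le_cos (x := θ)
        linarith
      exact Real.rpow_le_rpow (by linarith) hup hβpos
    have hle : (∫ φ in (0 : ℝ)..θ, (Real.cos φ - Real.cos θ) ^ β) ≤
        θ * (θ ^ 2 / 2) ^ β := by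
      calc (∫ φ in (0 : ℝ)..θ, (Real.cos φ - Real.cos θ) ^ β)
          ≤ ∫ _ in (0 : ℝ)..θ, (θ ^ 2 / 2) ^ β :=
            intervalIntegral.integral_mono_on hθ.le hfint intervalIntegrable_const hptwise
        _ = θ * (θ ^ 2 / 2) ^ β := by
            rw [intervalIntegral.integral_const]; simp
    have hint0 : 0 ≤ ∫ φ in (0 : ℝ)..θ, (Real.cos φ - Real.cos θ) ^ β := by
      refine intervalIntegral.integral_nonneg hθ.le fun u hu => ?_
      exact Real.rpow_nonneg
        (by linarith [Real.cos_le_cos_of_nonneg_of_le_pi hu.1 hθπ hu.2]) _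
    have hKθ : (0 : ℝ) ≤ K * θ ^ (-(2 * α)) := by positivity
    calc Real.sin θ ^ (-(2 * α)) * (∫ φ in (0 : ℝ)..θ, (Real.cos φ - Real.cos θ) ^ β)
        ≤ K * θ ^ (-(2 * α)) * (θ * (θ ^ 2 / 2) ^ β) :=
          mul_le_mul (hKbound θ hθ hθ') hle hint0 hKθ
      _ = K * 2 ^ (-β) := by
          have h2 : ((θ : ℝ) ^ 2 / 2) ^ β = θ ^ (2 * β) / 2 ^ β := by
            rw [Real.div_rpow (by positivity) (by norm_num),
              ← Real.rpow_natCast θ 2, ← Real.rpow_mul hθ.le]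
            norm_num
          have h3 : θ ^ (-(2 * α)) * (θ * θ ^ (2 * β)) = 1 := by
            rw [show θ * θ ^ (2 * β) = θ ^ (1 + 2 * β) by
                rw [Real.rpow_add hθ, Real.rpow_one],
              ← Real.rpow_add hθ, hexp, Real.rpow_zero]
          rw [h2, Real.rpow_neg (by norm_num : (0:ℝ) ≤ 2)]
          field_simp
          nlinarith [h3]
  · -- case β < 0
    refine ⟨K * 8 ^ (-β) / (β + 1), by positivity, ?_⟩
    intro θ hθ hθ'
    have hθπ : θ ≤ Real.pi := le_trans hθ' (by linarith [Real.pi_pos])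
    have hint0 : 0 ≤ ∫ φ in (0 : ℝ)..θ, (Real.cos φ - Real.cos θ) ^ β := by
      refine intervalIntegral.integral_nonneg hθ.le fun u hu => ?_
      exact Real.rpow_nonneg
        (by linarith [Real.cos_le_cos_of_nonneg_of_le_pi hu.1 hθπ hu.2]) _
    by_cases hfint : IntervalIntegrable (fun φ : ℝ => (Real.cos φ - Real.cos θ) ^ β)
        volume 0 θ
    · -- bound by g φ = 8^(-β) * θ^β * (θ - φ)^β
      have hgint : IntervalIntegrable
          (fun φ : ℝ => 8 ^ (-β) * θ ^ β * (θ - φ) ^ β) volume 0 θ := by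
        have h1 : IntervalIntegrable (fun x : ℝ => x ^ β) volume 0 θ :=
          intervalIntegral.intervalIntegrable_rpow' hβ
        have h2 := (h1.comp_sub_left θ)
        simpa using (h2.const_mul (8 ^ (-β) * θ ^ β)).symm
      have hptwise : ∀ φ ∈ Icc (0 : ℝ) θ,
          (Real.cos φ - Real.cos θ) ^ β ≤ 8 ^ (-β) * θ ^ β * (θ - φ) ^ β := by
        intro φ hφ
        rcases eq_or_lt_of_le hφ.2 with heq | hlt
        · subst heq
          simp [Real.zero_rpow (by linarith : β ≠ 0)]
        · have hlow := cos_sub_cos_lower_aux hφ.1 hφ.2 hθ'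
          have hfac : (θ ^ 2 - φ ^ 2) / 8 = (θ + φ) * (θ - φ) / 8 := by ring
          have hxpos : (0 : ℝ) < (θ + φ) * (θ - φ) / 8 := by
            have := hφ.1; nlinarith
          calc (Real.cos φ - Real.cos θ) ^ β
              ≤ ((θ + φ) * (θ - φ) / 8) ^ β := by
                refine Real.rpow_le_rpow_of_nonpos hxpos ?_ hβneg.le
                rw [← hfac]; exact hlow
            _ = (θ + φ) ^ β * (θ - φ) ^ β / 8 ^ β := by
                rw [Real.div_rpow (by nlinarith [hφ.1]) (by norm_num),
                  Real.mul_rpow (by linarith [hφ.1]) (by linarith)]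
            _ ≤ θ ^ β * (θ - φ) ^ β / 8 ^ β := by
                have hθφ : (θ + φ) ^ β ≤ θ ^ β :=
                  Real.rpow_le_rpow_of_nonpos hθ (by linarith [hφ.1]) hβneg.le
                have h8 : (0 : ℝ) < (8 : ℝ) ^ β := Real.rpow_pos_of_pos (by norm_num) β
                have hnn : (0 : ℝ) ≤ (θ - φ) ^ β := Real.rpow_nonneg (by linarith) _
                gcongr
            _ = 8 ^ (-β) * θ ^ β * (θ - φ) ^ β := by
                rw [Real.rpow_neg (by norm_num : (0:ℝ) ≤ 8)]
                field_simp
      have hgval : (∫ φ in (0 : ℝ)..θ, 8 ^ (-β) * θ ^ β * (θ - φ) ^ β) =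
          8 ^ (-β) * θ ^ β * (θ ^ (β + 1) / (β + 1)) := by
        rw [intervalIntegral.integral_const_mul]
        congr 1
        have h1 : (∫ φ in (0 : ℝ)..θ, (θ - φ) ^ β) = ∫ x in (0 : ℝ)..θ, x ^ β := by
          have := intervalIntegral.integral_comp_sub_left (a := (0:ℝ)) (b := θ)
            (fun u : ℝ => u ^ β) θ
          simpa using this
        rw [h1, integral_rpow (Or.inl hβ)]
        rw [Real.zero_rpow (by linarith : β + 1 ≠ 0)]
        ring
      have hle : (∫ φ in (0 : ℝ)..θ, (Real.cos φ - Real.cos θ) ^ β) ≤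
          8 ^ (-β) * θ ^ β * (θ ^ (β + 1) / (β + 1)) := by
        rw [← hgval]
        exact intervalIntegral.integral_mono_on hθ.le hfint hgint hptwise
      have hKθ : (0 : ℝ) ≤ K * θ ^ (-(2 * α)) := by positivity
      calc Real.sin θ ^ (-(2 * α)) * (∫ φ in (0 : ℝ)..θ, (Real.cos φ - Real.cos θ) ^ β)
          ≤ K * θ ^ (-(2 * α)) * (8 ^ (-β) * θ ^ β * (θ ^ (β + 1) / (β + 1))) :=
            mul_le_mul (hKbound θ hθ hθ') hle hint0 hKθ
        _ = K * 8 ^ (-β) / (β + 1) := by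
            have h3 : θ ^ (-(2 * α)) * (θ ^ β * θ ^ (β + 1)) = 1 := by
              rw [← Real.rpow_add hθ, ← Real.rpow_add hθ,
                show -(2 * α) + (β + (β + 1)) = 0 by rw [hβdef]; ring, Real.rpow_zero]
            calc K * θ ^ (-(2 * α)) * (8 ^ (-β) * θ ^ β * (θ ^ (β + 1) / (β + 1)))
                = K * 8 ^ (-β) / (β + 1) *
                  (θ ^ (-(2 * α)) * (θ ^ β * θ ^ (β + 1))) := by ring
              _ = K * 8 ^ (-β) / (β + 1) := by rw [h3, mul_one]
    · rw [intervalIntegral.integral_undef hfint]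
      have : (0:ℝ) < K * 8 ^ (-β) / (β + 1) := by positivity
      simpa using this.le
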